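/- Let N > 1 be an integer, α > 0, b ≤ 0 < c, and ε > 0. The initial value problem ψ'(r) = (1+ψ(r)²)·[ (c/√(1+ψ(r)²) − b)^{1/α}·√(1+ψ(r)²) − ((N−1)/(r+ε))·ψ(r) ] for r ≥ 0, ψ(0) = 0, has a unique solution ψ_ε on a maximal existence interval [0, R^ε_∞), and ψ_ε(r) > 0 and ψ_ε'(r) > 0 for all r ∈ (0, R^ε_∞). Moreover: if b = 0 then R^ε_∞ = ∞; if b < 0 then (c−b)^{−1/α} ≤ R^ε_∞ ≤ (−b)^{−1/α}·(N + ln 2) < ∞, and ψ_ε(r) → ∞ as r → R^ε_∞⁻. -/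

import Mathlib

open Set Filter Topology

/-- `ψ`, with derivative `ψ'`, solves the ε-regularized translating-profile equation
`ψ' = (1+ψ²)·[(c/√(1+ψ²) − b)^{1/α}·√(1+ψ²) − ((N−1)/(r+ε))·ψ]` on the set `J`,
with `ψ(0) = 0`. -/
def IsRegSolOn (N : ℕ) (α b c ε : ℝ) (J : Set ℝ) (ψ ψ' : ℝ → ℝ) : Prop :=
  ψ 0 = 0 ∧
  (∀ r ∈ J, HasDerivWithinAt ψ (ψ' r) J r) ∧
  (∀ r ∈ J,
    ψ' r = (1 + ψ r ^ 2) *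
      ((c / Real.sqrt (1 + ψ r ^ 2) - b) ^ (1 / α) * Real.sqrt (1 + ψ r ^ 2)
        - (((N : ℝ) - 1) / (r + ε)) * ψ r))

noncomputable section Stmt6Aux

namespace Stmt6

/-- The right-hand side of the ODE. -/
def FF (N : ℕ) (α b c ε : ℝ) (r y : ℝ) : ℝ :=
  (1 + y ^ 2) *
    ((c / Real.sqrt (1 + y ^ 2) - b) ^ (1 / α) * Real.sqrt (1 + y ^ 2)
      - (((N : ℝ) - 1) / (r + ε)) * y)

/-- A solution on `[0, S)` with the canonical derivative function. -/
def Sol (N : ℕ) (α b c ε : ℝ) (S : ℝ) (χ : ℝ → ℝ) : Prop :=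
  IsRegSolOn N α b c ε (Set.Ico 0 S) χ (fun r => FF N α b c ε r (χ r))

variable {N : ℕ} {α b c ε : ℝ}

section Basic

lemma sqrt1_pos (y : ℝ) : 0 < Real.sqrt (1 + y ^ 2) := by
  apply Real.sqrt_pos.2; positivity

lemma one_le_sqrt1 (y : ℝ) : 1 ≤ Real.sqrt (1 + y ^ 2) := by
  have h := Real.sqrt_le_sqrt (show (1:ℝ) ≤ 1 + y ^ 2 by nlinarith [sq_nonneg y])
  simpa using h

lemma sq_sqrt1 (y : ℝ) : Real.sqrt (1 + y ^ 2) ^ 2 = 1 + y ^ 2 :=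
  Real.sq_sqrt (by positivity)

lemma base_pos (hb : b ≤ 0) (hc : 0 < c) (y : ℝ) : 0 < c / Real.sqrt (1 + y ^ 2) - b := by
  have h1 := sqrt1_pos y
  have : 0 < c / Real.sqrt (1 + y ^ 2) := div_pos hc h1
  linarith

lemma sol_of_isRegSolOn {S : ℝ} {χ χ' : ℝ → ℝ}
    (h : IsRegSolOn N α b c ε (Set.Ico 0 S) χ χ') : Sol N α b c ε S χ := by
  obtain ⟨h0, hd, he⟩ := h
  refine ⟨h0, fun r hr => ?_, fun r hr => rfl⟩
  have := hd r hr
  rwa [he r hr] at this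

lemma sol_continuousOn {S : ℝ} {χ : ℝ → ℝ} (h : Sol N α b c ε S χ) :
    ContinuousOn χ (Set.Ico 0 S) :=
  fun r hr => (h.2.1 r hr).continuousWithinAt

lemma sol_restrict {S S' : ℝ} {χ : ℝ → ℝ} (h : Sol N α b c ε S χ) (hS' : S' ≤ S) :
    Sol N α b c ε S' χ := by
  refine ⟨h.1, fun r hr => ?_, fun r hr => rfl⟩
  exact (h.2.1 r ⟨hr.1, lt_of_lt_of_le hr.2 hS'⟩).mono (Set.Ico_subset_Ico_right hS')

end Basic

section DerivSign

/-- If a function has positive derivative within `s` at `r`, then just to the right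
(within `s`) its values exceed `f r`. -/
lemma right_pos_of_deriv_pos {f : ℝ → ℝ} {d r : ℝ} {s : Set ℝ}
    (hf : HasDerivWithinAt f d s r) (hd : 0 < d) :
    ∀ᶠ t in nhdsWithin r (s ∩ Set.Ioi r), f r < f t := by
  have h1 : ∀ᶠ t in nhdsWithin r (s \ {r}), 0 < slope f r t :=
    (hasDerivWithinAt_iff_tendsto_slope.1 hf).eventually_const_lt hd
  have h2 : nhdsWithin r (s ∩ Set.Ioi r) ≤ nhdsWithin r (s \ {r}) :=
    nhdsWithin_mono r (fun x hx => ⟨hx.1, ne_of_gt hx.2⟩)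
  filter_upwards [h2 h1, eventually_mem_nhdsWithin] with t ht htm
  have hlt : (0:ℝ) < t - r := sub_pos.2 htm.2
  have := mul_pos ht hlt
  rw [slope_def_field] at this
  have h3 : (f t - f r) / (t - r) * (t - r) = f t - f r := div_mul_cancel₀ _ (ne_of_gt hlt)
  nlinarith [this, h3]

/-- If a function has positive derivative within `s` at `r`, then just to the left
(within `s`) its values are below `f r`. -/
lemma left_pos_of_deriv_pos {f : ℝ → ℝ} {d r : ℝ} {s : Set ℝ}
    (hf : HasDerivWithinAt f d s r) (hd : 0 < d) :
    ∀ᶠ t in nhdsWithin r (s ∩ Set.Iio r), f t < f r := by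
  have h1 : ∀ᶠ t in nhdsWithin r (s \ {r}), 0 < slope f r t :=
    (hasDerivWithinAt_iff_tendsto_slope.1 hf).eventually_const_lt hd
  have h2 : nhdsWithin r (s ∩ Set.Iio r) ≤ nhdsWithin r (s \ {r}) :=
    nhdsWithin_mono r (fun x hx => ⟨hx.1, ne_of_lt hx.2⟩)
  filter_upwards [h2 h1, eventually_mem_nhdsWithin] with t ht htm
  have hlt : t - r < 0 := sub_neg.2 htm.2
  have := mul_neg_of_pos_of_neg ht hlt
  rw [slope_def_field] at this
  have h3 : (f t - f r) / (t - r) * (t - r) = f t - f r := div_mul_cancel₀ _ (ne_of_lt hlt)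
  nlinarith [this, h3]

end DerivSign

section Smooth

lemma sqrt1_ne (y : ℝ) : Real.sqrt (1 + y ^ 2) ≠ 0 := ne_of_gt (sqrt1_pos y)

lemma contDiff_sqrt1 : ContDiff ℝ 1 (fun y : ℝ => Real.sqrt (1 + y ^ 2)) := by
  apply ContDiff.sqrt
  · exact contDiff_const.add (contDiff_id.pow 2)
  · intro y; positivity

/-- The autonomous part `H(y) = (1+y²)·(c/√(1+y²) − b)^{1/α}·√(1+y²)` is `C¹`. -/
lemma contDiff_H (hb : b ≤ 0) (hc : 0 < c) :
    ContDiff ℝ 1 (fun y : ℝ =>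
      (1 + y ^ 2) * ((c / Real.sqrt (1 + y ^ 2) - b) ^ (1 / α) * Real.sqrt (1 + y ^ 2))) := by
  rw [contDiff_iff_contDiffAt]
  intro y
  have h1 : ContDiffAt ℝ 1 (fun y : ℝ => 1 + y ^ 2) y :=
    (contDiff_const.add (contDiff_id.pow 2)).contDiffAt
  have hs : ContDiffAt ℝ 1 (fun y : ℝ => Real.sqrt (1 + y ^ 2)) y := contDiff_sqrt1.contDiffAt
  have hbase : ContDiffAt ℝ 1 (fun y : ℝ => c / Real.sqrt (1 + y ^ 2) - b) y :=
    (contDiffAt_const.div hs (sqrt1_ne y)).sub contDiffAt_const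
  have hrpow : ContDiffAt ℝ 1 (fun y : ℝ => (c / Real.sqrt (1 + y ^ 2) - b) ^ (1 / α)) y :=
    hbase.rpow_const_of_ne (ne_of_gt (base_pos hb hc y))
  exact h1.mul (hrpow.mul hs)

lemma FF_eq (r y : ℝ) : FF N α b c ε r y =
    (1 + y ^ 2) * ((c / Real.sqrt (1 + y ^ 2) - b) ^ (1 / α) * Real.sqrt (1 + y ^ 2))
      - (((N : ℝ) - 1) / (r + ε)) * ((1 + y ^ 2) * y) := by
  unfold FF; ring

lemma contDiffOn_FF (hb : b ≤ 0) (hc : 0 < c) :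
    ContDiffOn ℝ 1 (fun p : ℝ × ℝ => FF N α b c ε p.1 p.2)
      ((Set.Ioi (-ε)) ×ˢ (Set.univ : Set ℝ)) := by
  have heq : (fun p : ℝ × ℝ => FF N α b c ε p.1 p.2) = fun p : ℝ × ℝ =>
      (1 + p.2 ^ 2) * ((c / Real.sqrt (1 + p.2 ^ 2) - b) ^ (1 / α) * Real.sqrt (1 + p.2 ^ 2))
        - (((N : ℝ) - 1) / (p.1 + ε)) * ((1 + p.2 ^ 2) * p.2) := by
    funext p; exact FF_eq p.1 p.2
  rw [heq]
  apply ContDiffOn.sub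
  · exact ((contDiff_H hb hc).comp contDiff_snd).contDiffOn
  · apply ContDiffOn.mul
    · apply ContDiffOn.div contDiffOn_const
      · exact (contDiff_fst.add contDiff_const).contDiffOn
      · rintro ⟨x, y⟩ hx
        have : -ε < x := hx.1
        intro hc'
        simp only at hc'
        linarith
    · exact (((contDiff_const.add (contDiff_id.pow 2)).mul contDiff_id).comp
        contDiff_snd).contDiffOn

lemma continuousOn_FF (hb : b ≤ 0) (hc : 0 < c) :
    ContinuousOn (fun p : ℝ × ℝ => FF N α b c ε p.1 p.2)
      ((Set.Ioi (-ε)) ×ˢ (Set.univ : Set ℝ)) :=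
  (contDiffOn_FF hb hc).continuousOn

lemma lipschitz_FF (hb : b ≤ 0) (hc : 0 < c) (hε : 0 < ε) (T M : ℝ) (hT : 0 ≤ T) :
    ∃ K : NNReal, ∀ t ∈ Set.Icc (0:ℝ) T,
      LipschitzOnWith K (fun y => FF N α b c ε t y) (Set.Icc (-M) M) := by
  set U : Set (ℝ × ℝ) := (Set.Ioi (-ε)) ×ˢ (Set.univ : Set ℝ) with hU
  have hUopen : IsOpen U := isOpen_Ioi.prod isOpen_univ
  set g : ℝ × ℝ → ℝ := fun p => FF N α b c ε p.1 p.2 with hg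
  have hgd : ContDiffOn ℝ 1 g U := contDiffOn_FF hb hc
  set B : Set (ℝ × ℝ) := (Set.Icc (0:ℝ) T) ×ˢ (Set.Icc (-M) M) with hB
  have hBU : B ⊆ U := fun p hp => ⟨lt_of_lt_of_le (by linarith) hp.1.1, trivial⟩
  have hBcp : IsCompact B := (isCompact_Icc).prod isCompact_Icc
  have hfc : ContinuousOn (fderiv ℝ g) U :=
    hgd.continuousOn_fderiv_of_isOpen hUopen le_rfl
  obtain ⟨C₀, hC₀⟩ := hBcp.exists_bound_of_continuousOn (hfc.mono hBU)
  set K : NNReal := ⟨max C₀ 0, le_max_right _ _⟩ with hK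
  refine ⟨K, fun t ht => ?_⟩
  -- the section y ↦ g (t, y) is Lipschitz on Icc (-M) M
  have hmain : LipschitzOnWith K g B := by
    apply Convex.lipschitzOnWith_of_nnnorm_hasFDerivWithin_le
      (f' := fun p => fderiv ℝ g p)
    · intro x hx
      have hdiff : DifferentiableAt ℝ g x :=
        (hgd.contDiffAt (hUopen.mem_nhds (hBU hx))).differentiableAt one_ne_zero
      exact hdiff.hasFDerivAt.hasFDerivWithinAt
    · intro x hx
      have h1 : ‖fderiv ℝ g x‖ ≤ max C₀ 0 := le_trans (hC₀ x hx) (le_max_left _ _)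
      exact_mod_cast h1
    · exact (convex_Icc _ _).prod (convex_Icc _ _)
  rw [lipschitzOnWith_iff_dist_le_mul] at hmain ⊢
  intro y₁ hy₁ y₂ hy₂
  have := hmain (t, y₁) ⟨ht, hy₁⟩ (t, y₂) ⟨ht, hy₂⟩
  simpa [Prod.dist_eq, dist_self, max_eq_right dist_nonneg] using this

lemma bound_FF (hb : b ≤ 0) (hc : 0 < c) (hε : 0 < ε) (T M : ℝ) (hT : 0 ≤ T) :
    ∃ C : ℝ, 0 ≤ C ∧ ∀ t ∈ Set.Icc (0:ℝ) T, ∀ y ∈ Set.Icc (-M) M,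
      |FF N α b c ε t y| ≤ C := by
  set B : Set (ℝ × ℝ) := (Set.Icc (0:ℝ) T) ×ˢ (Set.Icc (-M) M) with hB
  have hBU : B ⊆ (Set.Ioi (-ε)) ×ˢ (Set.univ : Set ℝ) :=
    fun p hp => ⟨lt_of_lt_of_le (by linarith) hp.1.1, trivial⟩
  have hBcp : IsCompact B := (isCompact_Icc).prod isCompact_Icc
  obtain ⟨C₀, hC₀⟩ := hBcp.exists_bound_of_continuousOn ((continuousOn_FF hb hc).mono hBU)
  refine ⟨max C₀ 0, le_max_right _ _, fun t ht y hy => ?_⟩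
  exact le_trans (hC₀ (t, y) ⟨ht, hy⟩) (le_max_left _ _)

end Smooth

section Unique

/-- Two local solutions of the ODE with the same initial value agree. -/
lemma agree (hb : b ≤ 0) (hc : 0 < c) (hε : 0 < ε) {f g : ℝ → ℝ} {a₀ b₀ : ℝ}
    (h0 : 0 ≤ a₀) (hab : a₀ ≤ b₀)
    (hfc : ContinuousOn f (Set.Icc a₀ b₀))
    (hfd : ∀ t ∈ Set.Ico a₀ b₀, HasDerivWithinAt f (FF N α b c ε t (f t)) (Set.Ici t) t)
    (hgc : ContinuousOn g (Set.Icc a₀ b₀))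
    (hgd : ∀ t ∈ Set.Ico a₀ b₀, HasDerivWithinAt g (FF N α b c ε t (g t)) (Set.Ici t) t)
    (hfg : f a₀ = g a₀) :
    Set.EqOn f g (Set.Icc a₀ b₀) := by
  obtain ⟨M₁, hM₁⟩ := isCompact_Icc.exists_bound_of_continuousOn hfc
  obtain ⟨M₂, hM₂⟩ := isCompact_Icc.exists_bound_of_continuousOn hgc
  set M : ℝ := max M₁ M₂ with hM
  obtain ⟨K, hK⟩ := lipschitz_FF (N := N) (α := α) hb hc hε b₀ M (le_trans h0 hab)
  set v : ℝ → ℝ → ℝ := fun t y => FF N α b c ε (min (max t a₀) b₀) y with hv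
  have hclamp : ∀ t ∈ Set.Ico a₀ b₀, min (max t a₀) b₀ = t := fun t ht => by
    rw [max_eq_left ht.1, min_eq_left ht.2.le]
  have hlip : ∀ t : ℝ, LipschitzOnWith K (v t) (Set.Icc (-M) M) := by
    intro t
    exact hK _ ⟨le_trans h0 (le_min (le_trans le_rfl (le_max_right t a₀)) hab),
      min_le_right _ _⟩
  have hmemf : ∀ t ∈ Set.Ico a₀ b₀, f t ∈ Set.Icc (-M) M := by
    intro t ht
    have h2 := hM₁ t ⟨ht.1, ht.2.le⟩
    rw [Real.norm_eq_abs] at h2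
    exact Set.mem_Icc.2 (abs_le.1 (le_trans h2 (le_max_left _ _)))
  have hmemg : ∀ t ∈ Set.Ico a₀ b₀, g t ∈ Set.Icc (-M) M := by
    intro t ht
    have h2 := hM₂ t ⟨ht.1, ht.2.le⟩
    rw [Real.norm_eq_abs] at h2
    exact Set.mem_Icc.2 (abs_le.1 (le_trans h2 (le_max_right _ _)))
  have hfd' : ∀ t ∈ Set.Ico a₀ b₀, HasDerivWithinAt f (v t (f t)) (Set.Ici t) t := by
    intro t ht
    show HasDerivWithinAt f (FF N α b c ε (min (max t a₀) b₀) (f t)) (Set.Ici t) t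
    rw [hclamp t ht]; exact hfd t ht
  have hgd' : ∀ t ∈ Set.Ico a₀ b₀, HasDerivWithinAt g (v t (g t)) (Set.Ici t) t := by
    intro t ht
    show HasDerivWithinAt g (FF N α b c ε (min (max t a₀) b₀) (g t)) (Set.Ici t) t
    rw [hclamp t ht]; exact hgd t ht
  exact ODE_solution_unique_of_mem_Icc_right (fun t _ => hlip t) hfc hfd' hmemf hgc hgd' hmemg hfg

lemma sol_derivIci {S : ℝ} {χ : ℝ → ℝ} (h : Sol N α b c ε S χ) :
    ∀ t ∈ Set.Ico (0:ℝ) S, HasDerivWithinAt χ (FF N α b c ε t (χ t)) (Set.Ici t) t := by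
  intro t ht
  have h1 : HasDerivWithinAt χ (FF N α b c ε t (χ t)) (Set.Ici t ∩ Set.Iio S) t := by
    apply (h.2.1 t ht).mono
    intro x hx
    exact ⟨le_trans ht.1 hx.1, hx.2⟩
  exact (hasDerivWithinAt_inter (Iio_mem_nhds ht.2)).1 h1

lemma sol_unique {S₁ S₂ : ℝ} {χ₁ χ₂ : ℝ → ℝ} (hb : b ≤ 0) (hc : 0 < c) (hε : 0 < ε)
    (h1 : Sol N α b c ε S₁ χ₁) (h2 : Sol N α b c ε S₂ χ₂) :
    Set.EqOn χ₁ χ₂ (Set.Ico 0 (min S₁ S₂)) := by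
  intro r hr
  have hrS₁ : r < S₁ := lt_of_lt_of_le hr.2 (min_le_left _ _)
  have hrS₂ : r < S₂ := lt_of_lt_of_le hr.2 (min_le_right _ _)
  have key : Set.EqOn χ₁ χ₂ (Set.Icc 0 r) := by
    apply agree hb hc hε le_rfl hr.1
    · exact (sol_continuousOn h1).mono (fun x hx => ⟨hx.1, lt_of_le_of_lt hx.2 hrS₁⟩)
    · intro t ht
      exact sol_derivIci h1 t ⟨ht.1, lt_of_lt_of_le ht.2 hrS₁.le⟩
    · exact (sol_continuousOn h2).mono (fun x hx => ⟨hx.1, lt_of_le_of_lt hx.2 hrS₂⟩)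
    · intro t ht
      exact sol_derivIci h2 t ⟨ht.1, lt_of_lt_of_le ht.2 hrS₂.le⟩
    · rw [h1.1, h2.1]
  exact key ⟨hr.1, le_rfl⟩

end Unique

section Sign

lemma FF_at_zero (r : ℝ) : FF N α b c ε r 0 = (c - b) ^ (1 / α) := by
  simp [FF]

lemma sol_nonneg (hb : b ≤ 0) (hc : 0 < c) (hα : 0 < α) {S : ℝ} {χ : ℝ → ℝ}
    (h : Sol N α b c ε S χ) : ∀ r ∈ Set.Ico (0:ℝ) S, 0 ≤ χ r := by
  intro r hr
  by_contra hneg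
  push_neg at hneg
  have hr0 : 0 < r := by
    rcases eq_or_lt_of_le hr.1 with h0 | h0
    · exfalso; rw [← h0, h.1] at hneg; exact lt_irrefl 0 hneg
    · exact h0
  set A := Set.Icc 0 r ∩ χ ⁻¹' (Set.Ici 0) with hA
  have hsub : Set.Icc 0 r ⊆ Set.Ico 0 S := fun x hx => ⟨hx.1, lt_of_le_of_lt hx.2 hr.2⟩
  have hcont : ContinuousOn χ (Set.Icc 0 r) := (sol_continuousOn h).mono hsub
  have hAclosed : IsClosed A :=
    hcont.preimage_isClosed_of_isClosed isClosed_Icc isClosed_Ici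
  have hAne : A.Nonempty := ⟨0, ⟨le_rfl, hr0.le⟩, by
    rw [Set.mem_preimage, h.1]; exact Set.self_mem_Ici⟩
  have hAbdd : BddAbove A := BddAbove.mono (fun x hx => hx.1) bddAbove_Icc
  set r₀ := sSup A with hr₀def
  have hr₀A : r₀ ∈ A := hAclosed.csSup_mem hAne hAbdd
  have hr₀nonneg : 0 ≤ χ r₀ := hr₀A.2
  have hr₀r : r₀ < r := by
    rcases eq_or_lt_of_le hr₀A.1.2 with hh | hh
    · exfalso; rw [hh] at hr₀nonneg; exact absurd hr₀nonneg (not_le.2 hneg)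
    · exact hh
  have hgt : ∀ t ∈ Set.Ioc r₀ r, χ t < 0 := by
    intro t ht
    by_contra hge; push_neg at hge
    have htA : t ∈ A := ⟨⟨le_trans hr₀A.1.1 ht.1.le, ht.2⟩, hge⟩
    exact absurd (le_csSup hAbdd htA) (not_le.2 ht.1)
  have hr₀S : r₀ ∈ Set.Ico 0 S := hsub ⟨hr₀A.1.1, hr₀A.1.2⟩
  have hev : ∀ᶠ t in nhdsWithin r₀ (Set.Ioo r₀ r), 0 < χ t := by
    rcases eq_or_lt_of_le hr₀nonneg with hz | hpos
    · have hd := h.2.1 r₀ hr₀S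
      have hpos' : 0 < FF N α b c ε r₀ (χ r₀) := by
        rw [← hz, FF_at_zero]
        exact Real.rpow_pos_of_pos (by linarith) _
      have h1 := right_pos_of_deriv_pos hd hpos'
      have h2 : nhdsWithin r₀ (Set.Ioo r₀ r) ≤
          nhdsWithin r₀ (Set.Ico 0 S ∩ Set.Ioi r₀) :=
        nhdsWithin_mono _ (fun x hx =>
          ⟨⟨le_trans hr₀A.1.1 hx.1.le, lt_trans hx.2 hr.2⟩, hx.1⟩)
      filter_upwards [h2 h1] with t ht
      rwa [← hz] at ht
    · have hc1 : ContinuousWithinAt χ (Set.Ioo r₀ r) r₀ :=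
        ((sol_continuousOn h) r₀ hr₀S).mono
          (fun x hx => ⟨le_trans hr₀A.1.1 hx.1.le, lt_trans hx.2 hr.2⟩)
      exact hc1.eventually_const_lt hpos
  have hne : (nhdsWithin r₀ (Set.Ioo r₀ r)).NeBot := by
    rw [nhdsWithin_Ioo_eq_nhdsGT hr₀r]; infer_instance
  obtain ⟨t, ht1, ht2⟩ := (hev.and eventually_mem_nhdsWithin).exists
  linarith [hgt t ⟨ht2.1, ht2.2.le⟩]

lemma sol_pos (hb : b ≤ 0) (hc : 0 < c) (hα : 0 < α) {S : ℝ} {χ : ℝ → ℝ}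
    (h : Sol N α b c ε S χ) : ∀ r ∈ Set.Ioo (0:ℝ) S, 0 < χ r := by
  intro r hr
  rcases lt_or_eq_of_le (sol_nonneg hb hc hα h r ⟨hr.1.le, hr.2⟩) with hpos | heq
  · exact hpos
  · exfalso
    have hmin : IsLocalMin χ r := by
      filter_upwards [Ico_mem_nhds hr.1 hr.2] with t ht
      have := sol_nonneg hb hc hα h t ht
      linarith [heq]
    have hd : HasDerivAt χ (FF N α b c ε r (χ r)) r :=
      (h.2.1 r ⟨hr.1.le, hr.2⟩).hasDerivAt (Ico_mem_nhds hr.1 hr.2)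
    have hzero := hmin.hasDerivAt_eq_zero hd
    rw [← heq, FF_at_zero] at hzero
    exact absurd hzero (ne_of_gt (Real.rpow_pos_of_pos (by linarith) _))

lemma sol_deriv_pos (hN : 1 < N) (hb : b ≤ 0) (hc : 0 < c) (hα : 0 < α) (hε : 0 < ε)
    {S : ℝ} {χ : ℝ → ℝ}
    (h : Sol N α b c ε S χ) : ∀ r ∈ Set.Ioo (0:ℝ) S, 0 < FF N α b c ε r (χ r) := by
  set φ : ℝ → ℝ := fun t => FF N α b c ε t (χ t) with hφ
  have hφcont : ContinuousOn φ (Set.Ico 0 S) := by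
    apply (continuousOn_FF hb hc).comp (continuousOn_id.prodMk (sol_continuousOn h))
    intro t ht
    exact ⟨lt_of_lt_of_le (by linarith) ht.1, trivial⟩
  intro r hr
  by_contra hneg
  push_neg at hneg
  have hS0 : 0 < S := lt_trans hr.1 hr.2
  have hφ0 : 0 < φ 0 := by
    have h1 : φ 0 = (c - b) ^ (1/α) := by
      show FF N α b c ε 0 (χ 0) = _
      rw [h.1, FF_at_zero]
    rw [h1]; exact Real.rpow_pos_of_pos (by linarith) _
  set A := Set.Icc 0 r ∩ φ ⁻¹' (Set.Iic 0) with hA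
  have hsub : Set.Icc 0 r ⊆ Set.Ico 0 S := fun x hx => ⟨hx.1, lt_of_le_of_lt hx.2 hr.2⟩
  have hAclosed : IsClosed A :=
    (hφcont.mono hsub).preimage_isClosed_of_isClosed isClosed_Icc isClosed_Iic
  have hAne : A.Nonempty := ⟨r, ⟨hr.1.le, le_rfl⟩, hneg⟩
  have hAbdd : BddBelow A := BddBelow.mono (fun x hx => hx.1) bddBelow_Icc
  set r₀ := sInf A with hr₀def
  have hr₀A : r₀ ∈ A := hAclosed.csInf_mem hAne hAbdd
  have hφr₀le : φ r₀ ≤ 0 := hr₀A.2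
  have hr₀0 : 0 < r₀ := by
    rcases eq_or_lt_of_le hr₀A.1.1 with h0 | h0
    · exfalso; rw [← h0] at hφr₀le; exact absurd hφ0 (not_lt.2 hφr₀le)
    · exact h0
  have hr₀S : r₀ ∈ Set.Ico 0 S := hsub ⟨hr₀A.1.1, hr₀A.1.2⟩
  have hlt : ∀ t ∈ Set.Ico 0 r₀, 0 < φ t := by
    intro t ht
    by_contra hle; push_neg at hle
    have htA : t ∈ A := ⟨⟨ht.1, le_trans ht.2.le hr₀A.1.2⟩, hle⟩
    exact absurd (csInf_le hAbdd htA) (not_le.2 ht.2)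
  have hne : (nhdsWithin r₀ (Set.Ioo 0 r₀)).NeBot := by
    rw [nhdsWithin_Ioo_eq_nhdsLT hr₀0]; infer_instance
  have hφr₀ : φ r₀ = 0 := by
    rcases lt_or_eq_of_le hφr₀le with hlt0 | heq0
    · exfalso
      have hc1 : ContinuousWithinAt φ (Set.Ioo 0 r₀) r₀ :=
        (hφcont r₀ hr₀S).mono (fun x hx => ⟨hx.1.le, lt_trans hx.2 hr₀S.2⟩)
      obtain ⟨t, ht1, ht2⟩ :=
        ((hc1.eventually_lt_const hlt0).and eventually_mem_nhdsWithin).exists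
      exact absurd ht1 (not_lt.2 (hlt t ⟨ht2.1.le, ht2.2⟩).le)
    · exact heq0
  have hχr₀ : 0 < χ r₀ := sol_pos hb hc hα h r₀ ⟨hr₀0, hr₀S.2⟩
  have hχd : HasDerivAt χ 0 r₀ := by
    have h1 := (h.2.1 r₀ hr₀S).hasDerivAt (Ico_mem_nhds hr₀0 hr₀S.2)
    rwa [show ((fun r => FF N α b c ε r (χ r)) r₀) = φ r₀ from rfl, hφr₀] at h1
  set Hf : ℝ → ℝ := fun y =>
    (1 + y ^ 2) * ((c / Real.sqrt (1 + y ^ 2) - b) ^ (1 / α) * Real.sqrt (1 + y ^ 2)) with hHf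
  have hH : HasDerivAt (fun t => Hf (χ t)) (deriv Hf (χ r₀) * 0) r₀ := by
    have hdH : HasDerivAt Hf (deriv Hf (χ r₀)) (χ r₀) :=
      (((contDiff_H (α := α) hb hc).differentiable one_ne_zero) (χ r₀)).hasDerivAt
    exact hdH.comp r₀ hχd
  have hK : HasDerivAt (fun t => (1 + χ t ^ 2) * χ t)
      (0 * χ r₀ + (1 + χ r₀ ^ 2) * 0) r₀ := by
    have h1 : HasDerivAt (fun t => 1 + χ t ^ 2) 0 r₀ := by
      have h2 := (hχd.pow 2).const_add 1
      simpa using h2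
    exact h1.mul hχd
  have hquot : HasDerivAt (fun t => ((N:ℝ)-1)/(t+ε)) (-(((N:ℝ)-1)/(r₀+ε)^2)) r₀ := by
    have h1 : HasDerivAt (fun t : ℝ => t + ε) 1 r₀ := (hasDerivAt_id r₀).add_const ε
    have h2 := (hasDerivAt_const r₀ ((N:ℝ)-1)).div h1 (by positivity)
    refine h2.congr_deriv ?_
    field_simp
    ring
  set D : ℝ := deriv Hf (χ r₀) * 0 - ((-(((N:ℝ)-1)/(r₀+ε)^2)) * ((1 + χ r₀ ^ 2) * χ r₀)
      + (((N:ℝ)-1)/(r₀+ε)) * (0 * χ r₀ + (1 + χ r₀ ^ 2) * 0)) with hD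
  have hφd : HasDerivAt φ D r₀ := by
    have heq : φ = fun t => Hf (χ t) - (((N:ℝ)-1)/(t+ε)) * ((1 + χ t ^ 2) * χ t) := by
      funext t
      show FF N α b c ε t (χ t) = _
      exact FF_eq t (χ t)
    rw [heq]
    exact hH.sub (hquot.mul hK)
  have hN1 : (1:ℝ) < (N:ℝ) := by exact_mod_cast hN
  have hDpos : 0 < D := by
    have hDeq : D = ((N:ℝ)-1)/(r₀+ε)^2 * ((1 + χ r₀ ^ 2) * χ r₀) := by rw [hD]; ring
    rw [hDeq]
    exact mul_pos (div_pos (by linarith) (by positivity))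
      (mul_pos (by positivity) hχr₀)
  have hev := left_pos_of_deriv_pos (hφd.hasDerivWithinAt (s := Set.univ)) hDpos
  rw [Set.univ_inter] at hev
  have h2 : nhdsWithin r₀ (Set.Ioo 0 r₀) ≤ nhdsWithin r₀ (Set.Iio r₀) :=
    nhdsWithin_mono _ (fun x hx => hx.2)
  obtain ⟨t, ht1, ht2⟩ := ((hev.filter_mono h2).and eventually_mem_nhdsWithin).exists
  rw [hφr₀] at ht1
  exact absurd ht1 (not_lt.2 (hlt t ⟨ht2.1.le, ht2.2⟩).le)

lemma sol_strictMono (hN : 1 < N) (hb : b ≤ 0) (hc : 0 < c) (hα : 0 < α) (hε : 0 < ε)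
    {S : ℝ} {χ : ℝ → ℝ}
    (h : Sol N α b c ε S χ) : StrictMonoOn χ (Set.Ico 0 S) := by
  apply strictMonoOn_of_deriv_pos (convex_Ico 0 S) (sol_continuousOn h)
  intro x hx
  rw [interior_Ico] at hx
  have hd : HasDerivAt χ (FF N α b c ε x (χ x)) x :=
    (h.2.1 x ⟨hx.1.le, hx.2⟩).hasDerivAt (Ico_mem_nhds hx.1 hx.2)
  rw [hd.deriv]
  exact sol_deriv_pos hN hb hc hα hε h x hx

end Sign

section Compare

lemma hasDerivAt_sqrt1 (y : ℝ) : HasDerivAt (fun y : ℝ => Real.sqrt (1 + y ^ 2))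
    (y / Real.sqrt (1 + y ^ 2)) y := by
  have h1 : HasDerivAt (fun y : ℝ => 1 + y ^ 2) (2 * y) y := by
    simpa using ((hasDerivAt_pow 2 y).const_add 1)
  have h2 := (Real.hasDerivAt_sqrt (x := 1 + y ^ 2) (by positivity)).comp y h1
  refine h2.congr_deriv ?_
  field_simp

lemma hasDerivAt_w (y : ℝ) : HasDerivAt (fun y : ℝ => y / Real.sqrt (1 + y ^ 2))
    (1 / Real.sqrt (1 + y ^ 2) ^ 3) y := by
  have h2 := (hasDerivAt_id y).div (hasDerivAt_sqrt1 y) (sqrt1_ne y)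
  refine h2.congr_deriv ?_
  have hs := sq_sqrt1 y
  have hpos := sqrt1_pos y
  rw [id_eq]
  field_simp
  nlinarith [hs, hpos]

lemma continuous_wfun : Continuous (fun y : ℝ => y / Real.sqrt (1 + y ^ 2)) :=
  continuous_id.div (contDiff_sqrt1.continuous) (fun y => sqrt1_ne y)

/-- Derivative of `w = χ/√(1+χ²)` along a solution, at interior points. -/
lemma sol_hasDerivAt_w {S : ℝ} {χ : ℝ → ℝ} (h : Sol N α b c ε S χ) {t : ℝ}
    (ht : t ∈ Set.Ioo (0:ℝ) S) :
    HasDerivAt (fun t => χ t / Real.sqrt (1 + χ t ^ 2))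
      (1 / Real.sqrt (1 + χ t ^ 2) ^ 3 * FF N α b c ε t (χ t)) t := by
  have hχd : HasDerivAt χ (FF N α b c ε t (χ t)) t :=
    (h.2.1 t ⟨ht.1.le, ht.2⟩).hasDerivAt (Ico_mem_nhds ht.1 ht.2)
  exact (hasDerivAt_w (χ t)).comp t hχd

/-- The `w`-derivative identity:
`w' = (c/s − b)^{1/α} − ((N−1)/(t+ε))·w` where `s = √(1+χ²)`. -/
lemma w_deriv_eq {t : ℝ} (htε : t + ε ≠ 0) (y : ℝ) :
    1 / Real.sqrt (1 + y ^ 2) ^ 3 * FF N α b c ε t y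
      = (c / Real.sqrt (1 + y ^ 2) - b) ^ (1 / α)
        - (((N : ℝ) - 1) / (t + ε)) * (y / Real.sqrt (1 + y ^ 2)) := by
  have hs := sq_sqrt1 y
  have hpos := sqrt1_pos y
  unfold FF
  set s := Real.sqrt (1 + y ^ 2) with hsdef
  set A := (c / s - b) ^ (1 / α) with hA
  rw [← hs]
  field_simp [htε]

/-- The key quantity `w = χ/√(1+χ²)`: upper bound. -/
lemma sol_w_le (hN : 1 < N) (hb : b ≤ 0) (hc : 0 < c) (hα : 0 < α) (hε : 0 < ε) {S : ℝ} {χ : ℝ → ℝ}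
    (h : Sol N α b c ε S χ) :
    ∀ r ∈ Set.Ico (0:ℝ) S, χ r / Real.sqrt (1 + χ r ^ 2) ≤ (c - b) ^ (1 / α) * r := by
  intro r hr
  rcases eq_or_lt_of_le hr.1 with h0 | h0
  · rw [← h0, h.1]; simp
  set w : ℝ → ℝ := fun t => χ t / Real.sqrt (1 + χ t ^ 2) with hw
  set q : ℝ := (c - b) ^ (1/α) with hq
  set g : ℝ → ℝ := fun t => q * t - w t with hg
  have hsub : Set.Icc 0 r ⊆ Set.Ico 0 S := fun x hx => ⟨hx.1, lt_of_le_of_lt hx.2 hr.2⟩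
  have hwc : ContinuousOn w (Set.Icc 0 r) :=
    continuous_wfun.comp_continuousOn ((sol_continuousOn h).mono hsub)
  have hgderiv : ∀ t ∈ Set.Ioo (0:ℝ) r,
      HasDerivAt g (q - 1 / Real.sqrt (1 + χ t ^ 2) ^ 3 * FF N α b c ε t (χ t)) t := by
    intro t ht
    have hwd := sol_hasDerivAt_w h ⟨ht.1, lt_trans ht.2 hr.2⟩
    have hqd : HasDerivAt (fun t : ℝ => q * t) q t := by
      simpa using (hasDerivAt_id t).const_mul q
    exact hqd.sub hwd
  have hgmono : MonotoneOn g (Set.Icc 0 r) := by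
    apply monotoneOn_of_deriv_nonneg (convex_Icc 0 r)
    · exact ((continuous_const.mul continuous_id).continuousOn).sub hwc
    · intro t ht
      rw [interior_Icc] at ht
      exact ((hgderiv t ht).differentiableAt).differentiableWithinAt
    · intro t ht
      rw [interior_Icc] at ht
      rw [(hgderiv t ht).deriv]
      -- show the derivative is nonneg
      have htS : t ∈ Set.Ioo (0:ℝ) S := ⟨ht.1, lt_trans ht.2 hr.2⟩
      have hweq := w_deriv_eq (N := N) (α := α) (b := b) (c := c)
        (show t + ε ≠ 0 from ne_of_gt (by linarith [ht.1])) (χ t)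
      rw [sub_nonneg, hweq]
      have hχ0 : 0 ≤ χ t := sol_nonneg hb hc hα h t ⟨ht.1.le, htS.2⟩
      have hs1 := one_le_sqrt1 (χ t)
      have hkey : (c / Real.sqrt (1 + χ t ^ 2) - b) ^ (1/α) ≤ q := by
        apply Real.rpow_le_rpow (le_of_lt (base_pos hb hc (χ t)))
        · have : c / Real.sqrt (1 + χ t ^ 2) ≤ c := div_le_self hc.le hs1
          linarith
        · positivity
      have hh0 : 0 ≤ (((N:ℝ) - 1) / (t + ε)) * (χ t / Real.sqrt (1 + χ t ^ 2)) := by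
        apply mul_nonneg
        · apply div_nonneg _ (by linarith [ht.1])
          have hN1 : (1:ℝ) ≤ (N:ℝ) := by exact_mod_cast hN.le
          linarith
        · exact div_nonneg hχ0 (sqrt1_pos (χ t)).le
      linarith
  have h1 : g 0 ≤ g r := hgmono ⟨le_rfl, hr.1⟩ ⟨hr.1, le_rfl⟩ hr.1
  have h2 : g 0 = 0 := by
    show q * 0 - χ 0 / Real.sqrt (1 + χ 0 ^ 2) = 0
    rw [h.1]; simp
  have h3 : g r = q * r - w r := rfl
  rw [h3, h2] at h1
  linarith

/-- The key quantity `w = χ/√(1+χ²)`: lower bound `w ≥ (−b)^{1/α}·r/N`. -/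
lemma sol_w_ge (hN : 1 < N) (hb : b ≤ 0) (hc : 0 < c) (hα : 0 < α) (hε : 0 < ε)
    {S : ℝ} {χ : ℝ → ℝ} (h : Sol N α b c ε S χ) :
    ∀ r ∈ Set.Ico (0:ℝ) S, (-b) ^ (1 / α) * r / N ≤ χ r / Real.sqrt (1 + χ r ^ 2) := by
  intro r hr
  have hN1 : (1:ℝ) < (N:ℝ) := by exact_mod_cast hN
  set n : ℕ := N - 1 with hn
  have hn0 : 0 < n := by omega
  have hNn : n + 1 = N := by omega
  have hncast : ((n:ℝ)) = (N:ℝ) - 1 := by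
    have : ((n:ℝ)) + 1 = (N:ℝ) := by exact_mod_cast congrArg (Nat.cast : ℕ → ℝ) hNn
    linarith
  set a : ℝ := (-b) ^ (1/α) with ha
  have ha0 : 0 ≤ a := Real.rpow_nonneg (by linarith) _
  rcases eq_or_lt_of_le hr.1 with h0 | h0
  · rw [← h0, h.1]; simp
  set w : ℝ → ℝ := fun t => χ t / Real.sqrt (1 + χ t ^ 2) with hw
  set f₁ : ℝ → ℝ := fun t => (t+ε)^n * w t - a/((n:ℝ)+1) * ((t+ε)^(n+1) - ε^(n+1)) with hf₁
  have hsub : Set.Icc 0 r ⊆ Set.Ico 0 S := fun x hx => ⟨hx.1, lt_of_le_of_lt hx.2 hr.2⟩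
  have hwc : ContinuousOn w (Set.Icc 0 r) :=
    continuous_wfun.comp_continuousOn ((sol_continuousOn h).mono hsub)
  have hf₁deriv : ∀ t ∈ Set.Ioo (0:ℝ) r, HasDerivAt f₁
      (((↑n * (t+ε)^(n-1) * 1) * w t
        + (t+ε)^n * (1 / Real.sqrt (1 + χ t ^ 2) ^ 3 * FF N α b c ε t (χ t)))
        - a/((n:ℝ)+1) * (↑(n+1) * (t+ε)^(n+1-1) * 1)) t := by
    intro t ht
    have hwd := sol_hasDerivAt_w h ⟨ht.1, lt_trans ht.2 hr.2⟩
    have h1 : HasDerivAt (fun t : ℝ => (t+ε)^n) (↑n * (t+ε)^(n-1) * 1) t :=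
      ((hasDerivAt_id t).add_const ε).pow n
    have h2 := h1.mul hwd
    have h3 : HasDerivAt (fun t : ℝ => (t+ε)^(n+1) - ε^(n+1))
        (↑(n+1) * (t+ε)^(n+1-1) * 1) t :=
      (((hasDerivAt_id t).add_const ε).pow (n+1)).sub_const _
    exact h2.sub (h3.const_mul _)
  have hf₁mono : MonotoneOn f₁ (Set.Icc 0 r) := by
    apply monotoneOn_of_deriv_nonneg (convex_Icc 0 r)
    · apply ContinuousOn.sub
      · exact (((continuous_id.add continuous_const).pow n).continuousOn).mul hwc
      · exact (continuous_const.mul (((continuous_id.add continuous_const).pow (n+1)).sub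
          continuous_const)).continuousOn
    · intro t ht
      rw [interior_Icc] at ht
      exact ((hf₁deriv t ht).differentiableAt).differentiableWithinAt
    · intro t ht
      rw [interior_Icc] at ht
      rw [(hf₁deriv t ht).deriv]
      have htε : (0:ℝ) < t + ε := by linarith [ht.1]
      have hweq := w_deriv_eq (N := N) (α := α) (b := b) (c := c)
        (ne_of_gt htε) (χ t)
      rw [hweq]
      set A := (c / Real.sqrt (1 + χ t ^ 2) - b) ^ (1/α) with hA
      have hkey : a ≤ A := by
        apply Real.rpow_le_rpow (by linarith)
        · have := div_pos hc (sqrt1_pos (χ t))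
          linarith
        · positivity
      have hpow : (t+ε)^n = (t+ε)^(n-1) * (t+ε) := by
        rw [← pow_succ]
        congr 1
        omega
      have hpow2 : (n+1-1 : ℕ) = n := by omega
      rw [hpow2, ← hncast]
      have hn1 : ((n:ℝ)) + 1 ≠ 0 := by positivity
      have hcast : ((n+1 : ℕ):ℝ) = (n:ℝ) + 1 := by push_cast; ring
      rw [hcast]
      -- deriv = (t+ε)^n * (A - a) after simplification
      have hgoal : (↑n * (t+ε)^(n-1) * 1) * w t
          + (t+ε)^n * (A - (↑n/(t+ε)) * w t)
          - a/((n:ℝ)+1) * (((n:ℝ)+1) * (t+ε)^n * 1) = (t+ε)^n * (A - a) := by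
        rw [hpow]
        field_simp
        ring
      rw [hgoal]
      have : (0:ℝ) ≤ (t+ε)^n := by positivity
      nlinarith [hkey]
  have h1 : f₁ 0 ≤ f₁ r := hf₁mono ⟨le_rfl, hr.1⟩ ⟨hr.1, le_rfl⟩ hr.1
  have h2 : f₁ 0 = 0 := by
    show (0+ε)^n * (χ 0 / Real.sqrt (1 + χ 0 ^ 2)) - a/((n:ℝ)+1) * ((0+ε)^(n+1) - ε^(n+1)) = 0
    rw [h.1]; simp
  rw [h2] at h1
  -- now the algebra
  have hrε : (0:ℝ) < r + ε := by linarith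
  have hp : (0:ℝ) < (r+ε)^n := by positivity
  have h6 : r * (r+ε)^n ≤ (r+ε)^(n+1) - ε^(n+1) := by
    have h7 : ε^n ≤ (r+ε)^n := pow_le_pow_left₀ hε.le (by linarith) n
    have h8 : ε^(n+1) ≤ ε * (r+ε)^n := by
      rw [pow_succ']
      exact mul_le_mul_of_nonneg_left h7 hε.le
    have h9 : (r+ε)^(n+1) = (r+ε)^n * (r+ε) := pow_succ _ _
    nlinarith
  have h10 : a/((n:ℝ)+1) * (r * (r+ε)^n) ≤ a/((n:ℝ)+1) * ((r+ε)^(n+1) - ε^(n+1)) :=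
    mul_le_mul_of_nonneg_left h6 (by positivity)
  have h11 : (a/((n:ℝ)+1) * r) * (r+ε)^n ≤ w r * (r+ε)^n := by
    have hf₁r : f₁ r = (r+ε)^n * w r - a/((n:ℝ)+1) * ((r+ε)^(n+1) - ε^(n+1)) := rfl
    have h1' : a/((n:ℝ)+1) * ((r+ε)^(n+1) - ε^(n+1)) ≤ (r+ε)^n * w r := by
      rw [hf₁r] at h1; linarith
    calc (a/((n:ℝ)+1) * r) * (r+ε)^n = a/((n:ℝ)+1) * (r * (r+ε)^n) := by ring
      _ ≤ a/((n:ℝ)+1) * ((r+ε)^(n+1) - ε^(n+1)) := h10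
      _ ≤ (r+ε)^n * w r := h1'
      _ = w r * (r+ε)^n := by ring
  have h12 : a/((n:ℝ)+1) * r ≤ w r := le_of_mul_le_mul_right h11 hp
  have hNcast : ((N:ℝ)) = (n:ℝ) + 1 := by rw [hncast]; ring
  calc a * r / (N:ℝ) = a/((n:ℝ)+1) * r := by rw [hNcast]; ring
    _ ≤ w r := h12

lemma w_lt_one (y : ℝ) : y / Real.sqrt (1 + y ^ 2) < 1 := by
  rw [div_lt_one (sqrt1_pos y)]
  rcases le_or_gt y 0 with hy | hy
  · exact lt_of_le_of_lt hy (sqrt1_pos y)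
  · have : y = Real.sqrt (y ^ 2) := by rw [Real.sqrt_sq hy.le]
    rw [this]
    exact Real.sqrt_lt_sqrt (by positivity) (by nlinarith)

/-- In the case `b < 0` the existence interval is at most `N·(−b)^{-1/α}` long. -/
lemma sol_S_le (hN : 1 < N) (hb' : b < 0) (hc : 0 < c) (hα : 0 < α) (hε : 0 < ε)
    {S : ℝ} {χ : ℝ → ℝ} (h : Sol N α b c ε S χ) (hS : 0 < S) :
    S ≤ (N : ℝ) * (-b) ^ (-(1 / α)) := by
  by_contra hgt
  push_neg at hgt
  set a : ℝ := (-b) ^ (1/α) with ha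
  have hb0 : (0:ℝ) < -b := by linarith
  have ha0 : 0 < a := Real.rpow_pos_of_pos hb0 _
  have hainv : (-b) ^ (-(1/α)) = a⁻¹ := by rw [Real.rpow_neg hb0.le]
  have hN0 : (0:ℝ) < (N:ℝ) := by exact_mod_cast Nat.zero_lt_of_lt hN
  set r : ℝ := (N:ℝ) * a⁻¹ with hr
  have hr0 : 0 ≤ r := by positivity
  have hrS : r < S := by rw [hainv] at hgt; exact hgt
  have hw := sol_w_ge hN hb'.le hc hα hε h r ⟨hr0, hrS⟩
  have hlt := w_lt_one (χ r)
  have heq : a * r / (N:ℝ) = 1 := by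
    rw [hr]
    field_simp
  linarith

/-- If `(c−b)^{1/α}·S < 1`, solutions on `[0,S)` are bounded. -/
lemma sol_bdd_of_small (hN : 1 < N) (hb : b ≤ 0) (hc : 0 < c) (hα : 0 < α) (hε : 0 < ε)
    {S : ℝ} {χ : ℝ → ℝ} (h : Sol N α b c ε S χ) (hS : 0 < S)
    (hq : (c - b) ^ (1 / α) * S < 1) :
    ∃ M : ℝ, ∀ r ∈ Set.Ico (0:ℝ) S, χ r ≤ M := by
  set q : ℝ := (c - b) ^ (1/α) * S with hqdef
  have hcb0 : (0:ℝ) ≤ (c - b) ^ (1/α) := Real.rpow_nonneg (by linarith) _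
  have hq0 : 0 ≤ q := mul_nonneg hcb0 hS.le
  refine ⟨Real.sqrt (q^2/(1-q^2)), ?_⟩
  intro r hr
  have hw := sol_w_le hN hb hc hα hε h r hr
  have hwq : χ r / Real.sqrt (1 + χ r ^ 2) ≤ q := by
    have h1 : (c - b) ^ (1/α) * r ≤ q := mul_le_mul_of_nonneg_left hr.2.le hcb0
    linarith
  have hχ0 : 0 ≤ χ r := sol_nonneg hb hc hα h r hr
  have hspos := sqrt1_pos (χ r)
  have hs2 := sq_sqrt1 (χ r)
  have hle : χ r ≤ q * Real.sqrt (1 + χ r ^ 2) := (div_le_iff₀ hspos).1 hwq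
  have hsq : χ r ^ 2 ≤ q^2 * (1 + χ r ^ 2) := by nlinarith [hle, hχ0, hspos.le, hq0]
  have h1q : 0 < 1 - q^2 := by nlinarith [hq, hq0]
  have hb2 : χ r ^ 2 ≤ q^2/(1-q^2) := by
    rw [le_div_iff₀ h1q]; nlinarith
  calc χ r = Real.sqrt (χ r ^ 2) := (Real.sqrt_sq hχ0).symm
    _ ≤ Real.sqrt (q^2/(1-q^2)) := Real.sqrt_le_sqrt hb2

/-- If `b = 0`, solutions are bounded on any bounded interval. -/
lemma sol_bdd_b0 (hN : 1 < N) (hb0 : b = 0) (hc : 0 < c) (hα : 0 < α) (hε : 0 < ε)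
    {S : ℝ} {χ : ℝ → ℝ} (h : Sol N α b c ε S χ) (hS : 0 < S) :
    ∃ M : ℝ, ∀ r ∈ Set.Ico (0:ℝ) S, χ r ≤ M := by
  subst hb0
  have hN1 : (1:ℝ) < (N:ℝ) := by exact_mod_cast hN
  set κ : ℝ := ((N:ℝ)-1)/(S+ε) with hκ
  have hκ0 : 0 < κ := div_pos (by linarith) (by linarith)
  set M : ℝ := max (max 1 ((2*c^(1/α)/κ)^α)) (c^(1/α)/κ) + 1 with hMdef
  have hmax1 : (1:ℝ) ≤ max (max 1 ((2*c^(1/α)/κ)^α)) (c^(1/α)/κ) :=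
    le_trans (le_max_left _ _) (le_max_left _ _)
  have hM1 : 1 ≤ M := by rw [hMdef]; linarith
  have hM0 : 0 < M := by linarith
  have hcpos : 0 < c^(1/α) := Real.rpow_pos_of_pos hc _
  -- the key barrier inequality
  have hkey : c^(1/α) * Real.sqrt (1+M^2) ^ (1 - 1/α) < κ * M := by
    set s : ℝ := Real.sqrt (1+M^2) with hsdef
    have hs1 : 1 ≤ s := one_le_sqrt1 M
    rcases le_or_gt α 1 with hα1 | hα1
    · have hexp : 1 - 1/α ≤ 0 := by
        have h1 : (1:ℝ) ≤ 1/α := by rw [le_div_iff₀ hα]; linarith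
        linarith
      have h1 : s ^ (1-1/α) ≤ 1 := Real.rpow_le_one_of_one_le_of_nonpos hs1 hexp
      have h2 : c^(1/α)/κ < M := by
        have := le_max_right (max 1 ((2*c^(1/α)/κ)^α)) (c^(1/α)/κ)
        linarith
      have h3 : c^(1/α) < M * κ := (div_lt_iff₀ hκ0).1 h2
      calc c^(1/α) * s^(1-1/α) ≤ c^(1/α) * 1 := mul_le_mul_of_nonneg_left h1 hcpos.le
        _ = c^(1/α) := mul_one _
        _ < κ * M := by linarith
    · have h1α : 0 < 1/α := by positivity
      have hexp0 : 0 ≤ 1 - 1/α := by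
        have : 1/α < 1 := by rw [div_lt_one hα]; exact hα1
        linarith
      have hexp1 : 1 - 1/α ≤ 1 := by linarith
      have hs2M : s ≤ 2*M := by
        have h3 : Real.sqrt (1+M^2) ≤ Real.sqrt ((2*M)^2) :=
          Real.sqrt_le_sqrt (by nlinarith)
        rwa [Real.sqrt_sq (by linarith)] at h3
      have h4 : s^(1-1/α) ≤ (2*M)^(1-1/α) :=
        Real.rpow_le_rpow (by linarith) hs2M hexp0
      have h5 : (2*M)^(1-1/α) = 2^(1-1/α) * M^(1-1/α) :=
        Real.mul_rpow (by norm_num) (by linarith)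
      have h6 : (2:ℝ)^(1-1/α) ≤ 2 := by
        calc (2:ℝ)^(1-1/α) ≤ (2:ℝ)^(1:ℝ) :=
              Real.rpow_le_rpow_of_exponent_le one_le_two hexp1
          _ = 2 := Real.rpow_one 2
      have h7 : 2*c^(1/α)/κ < M^(1/α) := by
        have hmax2 : (2*c^(1/α)/κ)^α < M := by
          have := le_max_right (1:ℝ) ((2*c^(1/α)/κ)^α)
          have := le_max_left (max 1 ((2*c^(1/α)/κ)^α)) (c^(1/α)/κ)
          linarith
        have hx0 : (0:ℝ) ≤ 2*c^(1/α)/κ := by positivity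
        have h8 := Real.rpow_lt_rpow (Real.rpow_nonneg hx0 α) hmax2 h1α
        rwa [← Real.rpow_mul hx0, mul_one_div, div_self (ne_of_gt hα),
          Real.rpow_one] at h8
      have h9 : 2*c^(1/α) < κ * M^(1/α) := by
        rw [div_lt_iff₀ hκ0] at h7
        linarith
      have hMexp0 : 0 < M^(1-1/α) := Real.rpow_pos_of_pos hM0 _
      have hM11 : M^(1/α) * M^(1-1/α) = M := by
        rw [← Real.rpow_add hM0]
        norm_num
      have hMe0 : (0:ℝ) ≤ M^(1-1/α) := hMexp0.le
      calc c^(1/α) * s^(1-1/α) ≤ c^(1/α) * (2 * M^(1-1/α)) := by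
            have h10 : s^(1-1/α) ≤ 2 * M^(1-1/α) := by
              rw [h5] at h4
              nlinarith
            exact mul_le_mul_of_nonneg_left h10 hcpos.le
        _ = (2*c^(1/α)) * M^(1-1/α) := by ring
        _ < (κ * M^(1/α)) * M^(1-1/α) := mul_lt_mul_of_pos_right h9 hMexp0
        _ = κ * M := by rw [mul_assoc, hM11]
  -- FF is negative on the barrier level M
  have hFFneg : ∀ t ∈ Set.Ico (0:ℝ) S, FF N α 0 c ε t M < 0 := by
    intro t ht
    have htε : (0:ℝ) < t + ε := by linarith [ht.1]
    set s : ℝ := Real.sqrt (1+M^2) with hsdef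
    have hs1 : 1 ≤ s := one_le_sqrt1 M
    have hspos : 0 < s := by linarith
    have hrw : (c/s - 0)^(1/α) * s = c^(1/α) * s^(1 - 1/α) := by
      rw [sub_zero, Real.div_rpow hc.le hspos.le, Real.rpow_sub hspos, Real.rpow_one]
      field_simp
    have hhge : κ ≤ ((N:ℝ)-1)/(t+ε) := by
      apply div_le_div_of_nonneg_left (by linarith) htε
      linarith [ht.2]
    have h11 : ((N:ℝ)-1)/(t+ε) * M ≥ κ * M := mul_le_mul_of_nonneg_right hhge hM0.le
    have h12 : c^(1/α) * s^(1-1/α) - ((N:ℝ)-1)/(t+ε) * M < 0 := by linarith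
    show (1 + M^2) * ((c / Real.sqrt (1+M^2) - 0)^(1/α) * Real.sqrt (1+M^2)
      - (((N:ℝ)-1)/(t+ε)) * M) < 0
    rw [← hsdef, hrw]
    exact mul_neg_of_pos_of_neg (by positivity) h12
  -- barrier argument
  refine ⟨M, ?_⟩
  intro r hr
  by_contra hgt
  push_neg at hgt
  have hr0 : 0 < r := by
    rcases eq_or_lt_of_le hr.1 with h0 | h0
    · exfalso; rw [← h0, h.1] at hgt; linarith
    · exact h0
  set A := Set.Icc 0 r ∩ χ ⁻¹' (Set.Ici M) with hA
  have hsub : Set.Icc 0 r ⊆ Set.Ico 0 S := fun x hx => ⟨hx.1, lt_of_le_of_lt hx.2 hr.2⟩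
  have hcont : ContinuousOn χ (Set.Icc 0 r) := (sol_continuousOn h).mono hsub
  have hAclosed : IsClosed A :=
    hcont.preimage_isClosed_of_isClosed isClosed_Icc isClosed_Ici
  have hAne : A.Nonempty := ⟨r, ⟨hr0.le, le_rfl⟩, hgt.le⟩
  have hAbdd : BddBelow A := BddBelow.mono (fun x hx => hx.1) bddBelow_Icc
  set r₀ := sInf A with hr₀def
  have hr₀A : r₀ ∈ A := hAclosed.csInf_mem hAne hAbdd
  have hMr₀ : M ≤ χ r₀ := hr₀A.2
  have hr₀0 : 0 < r₀ := by
    rcases eq_or_lt_of_le hr₀A.1.1 with h0 | h0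
    · exfalso; rw [← h0, h.1] at hMr₀; linarith
    · exact h0
  have hr₀S : r₀ ∈ Set.Ico 0 S := hsub ⟨hr₀A.1.1, hr₀A.1.2⟩
  have hlt : ∀ t ∈ Set.Ico 0 r₀, χ t < M := by
    intro t ht
    by_contra hle; push_neg at hle
    have htA : t ∈ A := ⟨⟨ht.1, le_trans ht.2.le hr₀A.1.2⟩, hle⟩
    exact absurd (csInf_le hAbdd htA) (not_le.2 ht.2)
  have hne : (nhdsWithin r₀ (Set.Ioo 0 r₀)).NeBot := by
    rw [nhdsWithin_Ioo_eq_nhdsLT hr₀0]; infer_instance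
  -- eventually to the left of r₀, χ > M — contradiction with hlt
  have hev : ∀ᶠ t in nhdsWithin r₀ (Set.Ioo 0 r₀), M < χ t := by
    rcases eq_or_lt_of_le hMr₀ with heq | hlt2
    · -- χ r₀ = M : negative derivative
      have hd : HasDerivAt χ (FF N α 0 c ε r₀ (χ r₀)) r₀ :=
        (h.2.1 r₀ hr₀S).hasDerivAt (Ico_mem_nhds hr₀0 hr₀S.2)
      have hdneg : FF N α 0 c ε r₀ (χ r₀) < 0 := by
        rw [← heq]; exact hFFneg r₀ hr₀S
      have hd2 : HasDerivAt (fun t => -(χ t)) (-(FF N α 0 c ε r₀ (χ r₀))) r₀ := hd.neg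
      have hev2 := left_pos_of_deriv_pos (hd2.hasDerivWithinAt (s := Set.univ))
        (by linarith)
      rw [Set.univ_inter] at hev2
      have hmono : nhdsWithin r₀ (Set.Ioo 0 r₀) ≤ nhdsWithin r₀ (Set.Iio r₀) :=
        nhdsWithin_mono _ (fun x hx => hx.2)
      filter_upwards [hev2.filter_mono hmono] with t ht
      have h13 : -(χ t) < -(χ r₀) := ht
      rw [← heq] at h13
      linarith
    · -- χ r₀ > M : continuity
      have hc1 : ContinuousWithinAt χ (Set.Ioo 0 r₀) r₀ :=
        ((sol_continuousOn h) r₀ hr₀S).mono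
          (fun x hx => ⟨hx.1.le, lt_trans hx.2 hr₀S.2⟩)
      exact hc1.eventually_const_lt hlt2
  obtain ⟨t, ht1, ht2⟩ := (hev.and eventually_mem_nhdsWithin).exists
  exact absurd ht1 (not_lt.2 (hlt t ⟨ht2.1.le, ht2.2⟩).le)

end Compare

section Exist

/-- Uniform-time local existence with arbitrary initial data in a box. -/
lemma step_FF (hb : b ≤ 0) (hc : 0 < c) (hε : 0 < ε) (T M : ℝ) (hT : 0 ≤ T) (hM : 0 ≤ M) :
    ∃ h : ℝ, 0 < h ∧ ∀ r₁ ∈ Set.Icc (0:ℝ) T, ∀ y₁ ∈ Set.Icc (-M) M,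
      ∃ f : ℝ → ℝ, f r₁ = y₁ ∧ ∀ t ∈ Set.Icc r₁ (r₁ + h),
        HasDerivWithinAt f (FF N α b c ε t (f t)) (Set.Icc r₁ (r₁ + h)) t := by
  obtain ⟨C, hC0, hC⟩ := bound_FF (N := N) (α := α) hb hc hε (T+1) (M+1) (by linarith)
  obtain ⟨K, hK⟩ := lipschitz_FF (N := N) (α := α) hb hc hε (T+1) (M+1) (by linarith)
  have hh0 : (0:ℝ) < min 1 (1/(C+1)) := lt_min one_pos (by positivity)
  refine ⟨min 1 (1/(C+1)), hh0, ?_⟩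
  intro r₁ hr₁ y₁ hy₁
  set h := min 1 (1/(C+1)) with hhdef
  have hh1 : h ≤ 1 := min_le_left _ _
  set C' : NNReal := ⟨C, hC0⟩ with hC'
  have hpl : IsPicardLindelof (fun t y => FF N α b c ε t y) (tmin := r₁) (tmax := r₁+h)
      ⟨r₁, le_rfl, by linarith⟩ y₁ 1 0 C' K := by
    refine ⟨?_, ?_, ?_, ?_⟩
    · intro t ht
      have h1 : Metric.closedBall y₁ ((1:NNReal):ℝ) ⊆ Set.Icc (-(M+1)) (M+1) := by
        rw [NNReal.coe_one, Real.closedBall_eq_Icc]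
        exact Set.Icc_subset_Icc (by linarith [hy₁.1]) (by linarith [hy₁.2])
      exact (hK t ⟨le_trans hr₁.1 ht.1, by linarith [ht.2, hr₁.2]⟩).mono h1
    · intro y _
      apply (continuousOn_FF hb hc).comp
        ((continuous_id.prodMk continuous_const).continuousOn)
      intro t ht
      exact ⟨lt_of_lt_of_le (by linarith) (le_trans hr₁.1 ht.1), trivial⟩
    · intro t ht y hy
      have hy' : y ∈ Set.Icc (-(M+1)) (M+1) := by
        rw [NNReal.coe_one, Real.closedBall_eq_Icc] at hy
        exact ⟨by linarith [hy.1, hy₁.1], by linarith [hy.2, hy₁.2]⟩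
      rw [Real.norm_eq_abs]
      exact hC t ⟨le_trans hr₁.1 ht.1, by linarith [ht.2, hr₁.2]⟩ y hy'
    · have heq : max (r₁ + h - r₁) (r₁ - r₁) = h := by
        rw [add_sub_cancel_left, sub_self]
        exact max_eq_left hh0.le
      show C * max (r₁ + h - r₁) (r₁ - r₁) ≤ ((1:NNReal):ℝ) - ((0:NNReal):ℝ)
      rw [heq, NNReal.coe_one, NNReal.coe_zero, sub_zero]
      calc C * h ≤ C * (1/(C+1)) :=
            mul_le_mul_of_nonneg_left (min_le_right _ _) hC0
        _ ≤ 1 := by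
            rw [mul_one_div]
            exact div_le_one_of_le₀ (by linarith) (by positivity)
  exact hpl.exists_eq_forall_mem_Icc_hasDerivWithinAt₀

/-- There is at least one local solution. -/
lemma exists_sol (hb : b ≤ 0) (hc : 0 < c) (hε : 0 < ε) :
    ∃ S χ, 0 < S ∧ Sol N α b c ε S χ := by
  obtain ⟨h, hh0, hstep⟩ := step_FF (N := N) (α := α) hb hc hε 0 0 le_rfl le_rfl
  obtain ⟨f, hf0, hf⟩ := hstep 0 ⟨le_rfl, le_rfl⟩ 0 (by norm_num)
  refine ⟨h, f, hh0, hf0, fun r hr => ?_, fun r hr => rfl⟩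
  have h1 := hf r (by rw [zero_add]; exact ⟨hr.1, hr.2.le⟩)
  rw [zero_add] at h1
  exact h1.mono Set.Ico_subset_Icc_self

/-- A bounded solution can be extended strictly. -/
lemma sol_extend (hb : b ≤ 0) (hc : 0 < c) (hα : 0 < α) (hε : 0 < ε)
    {S M : ℝ} {χ : ℝ → ℝ} (h : Sol N α b c ε S χ) (hS : 0 < S)
    (hbd : ∀ r ∈ Set.Ico (0:ℝ) S, χ r ≤ M) :
    ∃ S' χ', S < S' ∧ Sol N α b c ε S' χ' := by
  set M' : ℝ := max M 0 with hM'def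
  have hM'0 : (0:ℝ) ≤ M' := le_max_right _ _
  obtain ⟨hstep, hh0, hex⟩ := step_FF (N := N) (α := α) hb hc hε S M' hS.le hM'0
  set r₁ : ℝ := max 0 (S - hstep/2) with hr₁def
  have hr₁0 : 0 ≤ r₁ := le_max_left _ _
  have hr₁S : r₁ < S := max_lt hS (by linarith)
  have hy₁ : χ r₁ ∈ Set.Icc (-M') M' := by
    constructor
    · have := sol_nonneg hb hc hα h r₁ ⟨hr₁0, hr₁S⟩; linarith
    · exact le_trans (hbd r₁ ⟨hr₁0, hr₁S⟩) (le_max_left _ _)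
  obtain ⟨f, hf1, hfd⟩ := hex r₁ ⟨hr₁0, hr₁S.le⟩ (χ r₁) hy₁
  set S' : ℝ := r₁ + hstep with hS'def
  have hSS' : S < S' := by
    have : S - hstep/2 ≤ r₁ := le_max_right _ _
    rw [hS'def]; linarith
  have hagree : ∀ ρ ∈ Set.Ico r₁ S, χ ρ = f ρ := by
    intro ρ hρ
    have key : Set.EqOn χ f (Set.Icc r₁ ρ) := by
      apply agree hb hc hε hr₁0 hρ.1
      · exact (sol_continuousOn h).mono
          (fun x hx => ⟨le_trans hr₁0 hx.1, lt_of_le_of_lt hx.2 hρ.2⟩)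
      · intro t ht
        exact sol_derivIci h t ⟨le_trans hr₁0 ht.1, lt_trans ht.2 hρ.2⟩
      · have hfc : ContinuousOn f (Set.Icc r₁ (r₁+hstep)) :=
          fun x hx => (hfd x hx).continuousWithinAt
        exact hfc.mono (Set.Icc_subset_Icc_right (by linarith [hρ.2]))
      · intro t ht
        have htmem : t ∈ Set.Icc r₁ (r₁+hstep) := ⟨ht.1, by linarith [ht.2, hρ.2]⟩
        have h1 : HasDerivWithinAt f (FF N α b c ε t (f t))
            (Set.Ici t ∩ Set.Iio (r₁+hstep)) t := by
          apply (hfd t htmem).mono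
          intro x hx
          exact ⟨le_trans ht.1 hx.1, hx.2.le⟩
        exact (hasDerivWithinAt_inter
          (Iio_mem_nhds (by linarith [ht.2, hρ.2] : t < r₁+hstep))).1 h1
      · exact hf1.symm
    exact key ⟨hρ.1, le_rfl⟩
  set g : ℝ → ℝ := fun r => if r < S then χ r else f r with hgdef
  refine ⟨S', g, hSS', ?_, ?_, fun r hr => rfl⟩
  · show (if (0:ℝ) < S then χ 0 else f 0) = 0
    rw [if_pos hS]; exact h.1
  · intro r hr
    rcases lt_or_ge r S with hrS | hrS
    · have hd := h.2.1 r ⟨hr.1, hrS⟩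
      have h1 : HasDerivWithinAt χ (FF N α b c ε r (χ r)) (Set.Ico 0 S') r := by
        apply (hasDerivWithinAt_inter (Iio_mem_nhds hrS)).1
        apply hd.mono
        intro x hx
        exact ⟨hx.1.1, hx.2⟩
      have heq : g r = χ r := if_pos hrS
      have hev : g =ᶠ[nhdsWithin r (Set.Ico 0 S')] χ := by
        filter_upwards [mem_nhdsWithin_of_mem_nhds (Iio_mem_nhds hrS)] with t ht
        exact if_pos ht
      have h2 := h1.congr_of_eventuallyEq hev heq
      show HasDerivWithinAt g (FF N α b c ε r (g r)) (Set.Ico 0 S') r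
      rw [heq]
      exact h2
    · have hrr₁ : r₁ < r := lt_of_lt_of_le hr₁S hrS
      have htmem : r ∈ Set.Icc r₁ (r₁+hstep) := ⟨hrr₁.le, by linarith [hr.2]⟩
      have h1 : HasDerivWithinAt f (FF N α b c ε r (f r))
          (Set.Ico 0 S' ∩ Set.Ioi r₁) r := by
        apply (hfd r htmem).mono
        intro x hx
        exact ⟨hx.2.le, hx.1.2.le⟩
      have h2 : HasDerivWithinAt f (FF N α b c ε r (f r)) (Set.Ico 0 S') r :=
        (hasDerivWithinAt_inter (Ioi_mem_nhds hrr₁)).1 h1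
      have heq : g r = f r := if_neg (not_lt.2 hrS)
      have hev : g =ᶠ[nhdsWithin r (Set.Ico 0 S')] f := by
        filter_upwards [mem_nhdsWithin_of_mem_nhds (Ioi_mem_nhds hrr₁),
          eventually_mem_nhdsWithin] with t ht htm
        by_cases htS : t < S
        · show (if t < S then χ t else f t) = f t
          rw [if_pos htS]
          exact hagree t ⟨le_of_lt ht, htS⟩
        · exact if_neg htS
      have h3 := h2.congr_of_eventuallyEq hev heq
      show HasDerivWithinAt g (FF N α b c ε r (g r)) (Set.Ico 0 S') r
      rw [heq]
      exact h3

end Exist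

section Glue

open Classical in
/-- The glued (maximal) solution. -/
def Psi (N : ℕ) (α b c ε : ℝ) (r : ℝ) : ℝ :=
  if h : ∃ p : ℝ × (ℝ → ℝ), Sol N α b c ε p.1 p.2 ∧ r ∈ Set.Ico 0 p.1
    then h.choose.2 r else 0

lemma psi_eq (hb : b ≤ 0) (hc : 0 < c) (hε : 0 < ε) {S r : ℝ} {χ : ℝ → ℝ}
    (hsol : Sol N α b c ε S χ) (hr : r ∈ Set.Ico 0 S) : Psi N α b c ε r = χ r := by
  have hex : ∃ p : ℝ × (ℝ → ℝ), Sol N α b c ε p.1 p.2 ∧ r ∈ Set.Ico 0 p.1 :=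
    ⟨(S, χ), hsol, hr⟩
  classical
  rw [Psi, dif_pos hex]
  have h1 := hex.choose_spec
  exact sol_unique hb hc hε h1.1 hsol ⟨hr.1, lt_min h1.2.2 hr.2⟩

lemma psi_sol (hb : b ≤ 0) (hc : 0 < c) (hε : 0 < ε) {J : Set ℝ}
    (hJ : J ⊆ Set.Ici 0) (h0 : (0:ℝ) ∈ J)
    (hex : ∀ r ∈ J, ∃ S χ, Sol N α b c ε S χ ∧ r < S) :
    IsRegSolOn N α b c ε J (Psi N α b c ε) (fun r => FF N α b c ε r (Psi N α b c ε r)) := by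
  obtain ⟨S₀, χ₀, hsol₀, h0S₀⟩ := hex 0 h0
  have hpsi0 : Psi N α b c ε 0 = 0 := by
    rw [psi_eq hb hc hε hsol₀ ⟨le_rfl, h0S₀⟩]; exact hsol₀.1
  refine ⟨hpsi0, ?_, fun r hr => rfl⟩
  intro r hr
  obtain ⟨S, χ, hχ, hrS⟩ := hex r hr
  have hr0 : 0 ≤ r := hJ hr
  have hd := hχ.2.1 r ⟨hr0, hrS⟩
  have h1 : HasDerivWithinAt χ (FF N α b c ε r (χ r)) (J ∩ Set.Iio S) r := by
    apply hd.mono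
    intro x hx
    exact ⟨hJ hx.1, hx.2⟩
  have h2 : HasDerivWithinAt χ (FF N α b c ε r (χ r)) J r :=
    (hasDerivWithinAt_inter (Iio_mem_nhds hrS)).1 h1
  have heq : Psi N α b c ε r = χ r := psi_eq hb hc hε hχ ⟨hr0, hrS⟩
  have hev : Psi N α b c ε =ᶠ[nhdsWithin r J] χ := by
    filter_upwards [mem_nhdsWithin_of_mem_nhds (Iio_mem_nhds hrS),
      eventually_mem_nhdsWithin] with t ht htm
    exact psi_eq hb hc hε hχ ⟨hJ htm, ht⟩
  have h3 := h2.congr_of_eventuallyEq hev heq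
  show HasDerivWithinAt (Psi N α b c ε) (FF N α b c ε r (Psi N α b c ε r)) J r
  rw [heq]
  exact h3

end Glue

end Stmt6

end Stmt6Aux

/-- the ε-regularized problem has a unique solution `ψ_ε` on a maximal
existence interval, positive with positive derivative; the interval is `[0, ∞)` when
`b = 0`, while for `b < 0` its endpoint `R` satisfies
`(c−b)^{−1/α} ≤ R ≤ (−b)^{−1/α}(N + ln 2)` and `ψ_ε → ∞` at `R⁻`. -/
theorem stmt6 (N : ℕ) (hN : 1 < N) (α b c ε : ℝ) (hα : 0 < α) (hb : b ≤ 0)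
    (hc : 0 < c) (hε : 0 < ε) :
    (b = 0 → ∃ ψ ψ' : ℝ → ℝ,
      IsRegSolOn N α b c ε (Set.Ici 0) ψ ψ' ∧
      (∀ (S : ℝ) (χ χ' : ℝ → ℝ), 0 < S →
        IsRegSolOn N α b c ε (Set.Ico 0 S) χ χ' → Set.EqOn χ ψ (Set.Ico 0 S)) ∧
      (∀ r : ℝ, 0 < r → 0 < ψ r ∧ 0 < ψ' r)) ∧
    (b < 0 → ∃ (R : ℝ) (ψ ψ' : ℝ → ℝ),
      0 < R ∧ IsRegSolOn N α b c ε (Set.Ico 0 R) ψ ψ' ∧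
      (∀ (S : ℝ) (χ χ' : ℝ → ℝ), 0 < S →
        IsRegSolOn N α b c ε (Set.Ico 0 S) χ χ' →
        S ≤ R ∧ Set.EqOn χ ψ (Set.Ico 0 S)) ∧
      (∀ r ∈ Set.Ioo (0 : ℝ) R, 0 < ψ r ∧ 0 < ψ' r) ∧
      (c - b) ^ (-(1 / α)) ≤ R ∧ R ≤ (-b) ^ (-(1 / α)) * ((N : ℝ) + Real.log 2) ∧
      Filter.Tendsto ψ (nhdsWithin R (Set.Iio R)) Filter.atTop) := by
  classical
  open Stmt6 in
  constructor
  · -- case b = 0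
    intro hb0
    obtain ⟨S₀, χ₀, hS₀, hsol₀⟩ := exists_sol (N := N) (α := α) (b := b) (c := c) (ε := ε) hb hc hε
    set P : Set ℝ := {S | 0 < S ∧ ∃ χ, Sol N α b c ε S χ} with hPdef
    have hPne : P.Nonempty := ⟨S₀, hS₀, χ₀, hsol₀⟩
    have hnbdd : ¬ BddAbove P := by
      intro hbdd
      set R := sSup P with hRdef
      have hR0 : 0 < R := lt_of_lt_of_le hS₀ (le_csSup hbdd ⟨hS₀, χ₀, hsol₀⟩)
      have hex : ∀ r ∈ Set.Ico (0:ℝ) R, ∃ S χ, Sol N α b c ε S χ ∧ r < S := by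
        intro r hr
        obtain ⟨S, hSP, hrS⟩ := exists_lt_of_lt_csSup hPne hr.2
        obtain ⟨hSpos, χ, hχ⟩ := hSP
        exact ⟨S, χ, hχ, hrS⟩
      have hpsiR : Sol N α b c ε R (Psi N α b c ε) :=
        psi_sol hb hc hε (fun x hx => hx.1) ⟨le_rfl, hR0⟩ hex
      obtain ⟨M, hM⟩ := sol_bdd_b0 hN hb0 hc hα hε hpsiR hR0
      obtain ⟨S', χ', hS', hsol'⟩ := sol_extend hb hc hα hε hpsiR hR0 hM
      have : S' ≤ R := le_csSup hbdd ⟨lt_trans hR0 hS', χ', hsol'⟩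
      linarith
    have hex : ∀ r ∈ Set.Ici (0:ℝ), ∃ S χ, Sol N α b c ε S χ ∧ r < S := by
      intro r _
      obtain ⟨S, hSP, hrS⟩ := not_bddAbove_iff.1 hnbdd r
      exact ⟨S, hSP.2.choose, hSP.2.choose_spec, hrS⟩
    refine ⟨Psi N α b c ε, fun r => FF N α b c ε r (Psi N α b c ε r),
      psi_sol hb hc hε (fun x hx => hx) (by exact Set.self_mem_Ici) hex, ?_, ?_⟩
    · intro S χ χ' hS hsol r hr
      exact (psi_eq hb hc hε (sol_of_isRegSolOn hsol) hr).symm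
    · intro r hr
      obtain ⟨S, χ, hχ, hrS⟩ := hex r (le_of_lt hr)
      have heq : Psi N α b c ε r = χ r := psi_eq hb hc hε hχ ⟨hr.le, hrS⟩
      constructor
      · rw [heq]; exact sol_pos hb hc hα hχ r ⟨hr, hrS⟩
      · show 0 < FF N α b c ε r (Psi N α b c ε r)
        rw [heq]; exact sol_deriv_pos hN hb hc hα hε hχ r ⟨hr, hrS⟩
  · -- case b < 0
    intro hb'
    obtain ⟨S₀, χ₀, hS₀, hsol₀⟩ := exists_sol (N := N) (α := α) (b := b) (c := c) (ε := ε) hb hc hε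
    set P : Set ℝ := {S | 0 < S ∧ ∃ χ, Sol N α b c ε S χ} with hPdef
    have hPne : P.Nonempty := ⟨S₀, hS₀, χ₀, hsol₀⟩
    have hbdd : BddAbove P := by
      refine ⟨(N : ℝ) * (-b) ^ (-(1 / α)), fun S hS => ?_⟩
      exact sol_S_le hN hb' hc hα hε hS.2.choose_spec hS.1
    set R := sSup P with hRdef
    have hR0 : 0 < R := lt_of_lt_of_le hS₀ (le_csSup hbdd ⟨hS₀, χ₀, hsol₀⟩)
    have hex : ∀ r ∈ Set.Ico (0:ℝ) R, ∃ S χ, Sol N α b c ε S χ ∧ r < S := by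
      intro r hr
      obtain ⟨S, hSP, hrS⟩ := exists_lt_of_lt_csSup hPne hr.2
      exact ⟨S, hSP.2.choose, hSP.2.choose_spec, hrS⟩
    have hpsiR : Sol N α b c ε R (Psi N α b c ε) :=
      psi_sol hb hc hε (fun x hx => hx.1) ⟨le_rfl, hR0⟩ hex
    have hunbdd : ¬ ∃ M : ℝ, ∀ r ∈ Set.Ico (0:ℝ) R, Psi N α b c ε r ≤ M := by
      rintro ⟨M, hM⟩
      obtain ⟨S', χ', hS', hsol'⟩ := sol_extend hb hc hα hε hpsiR hR0 hM
      have : S' ≤ R := le_csSup hbdd ⟨lt_trans hR0 hS', χ', hsol'⟩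
      linarith
    have hbneg : (0:ℝ) < -b := by linarith
    have hcb : (0:ℝ) < c - b := by linarith
    refine ⟨R, Psi N α b c ε, fun r => FF N α b c ε r (Psi N α b c ε r), hR0, hpsiR, ?_, ?_, ?_, ?_, ?_⟩
    · intro S χ χ' hS hsol
      have hsol2 := sol_of_isRegSolOn hsol
      refine ⟨le_csSup hbdd ⟨hS, χ, hsol2⟩, fun r hr => (psi_eq hb hc hε hsol2 hr).symm⟩
    · intro r hr
      exact ⟨sol_pos hb hc hα hpsiR r hr, sol_deriv_pos hN hb hc hα hε hpsiR r hr⟩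
    · -- lower bound
      by_contra hlt
      push_neg at hlt
      have hq : (c - b) ^ (1 / α) * R < 1 := by
        have h1 : (0:ℝ) < (c - b) ^ (1 / α) := Real.rpow_pos_of_pos hcb _
        have h2 : (c - b) ^ (1 / α) * R < (c - b) ^ (1 / α) * (c - b) ^ (-(1 / α)) :=
          mul_lt_mul_of_pos_left hlt h1
        rwa [← Real.rpow_add hcb, add_neg_cancel, Real.rpow_zero] at h2
      obtain ⟨M, hM⟩ := sol_bdd_of_small hN hb hc hα hε hpsiR hR0 hq
      exact hunbdd ⟨M, hM⟩
    · -- upper bound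
      have h1 : R ≤ (N : ℝ) * (-b) ^ (-(1 / α)) :=
        csSup_le hPne (fun S hS => sol_S_le hN hb' hc hα hε hS.2.choose_spec hS.1)
      have h2 : (0:ℝ) ≤ (-b) ^ (-(1 / α)) := Real.rpow_nonneg hbneg.le _
      have h3 : (0:ℝ) < Real.log 2 := Real.log_pos one_lt_two
      calc R ≤ (N : ℝ) * (-b) ^ (-(1 / α)) := h1
        _ = (-b) ^ (-(1 / α)) * (N : ℝ) := mul_comm _ _
        _ ≤ (-b) ^ (-(1 / α)) * ((N : ℝ) + Real.log 2) := by
            apply mul_le_mul_of_nonneg_left (by linarith) h2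
    · -- blow-up
      rw [Filter.tendsto_atTop]
      intro M
      push_neg at hunbdd
      obtain ⟨r₀, hr₀, hMr₀⟩ := hunbdd M
      have hmono := sol_strictMono hN hb hc hα hε hpsiR
      filter_upwards [Ioo_mem_nhdsLT_of_mem (Set.mem_Ioc.2 ⟨hr₀.2, le_rfl⟩)] with r hr
      have : Psi N α b c ε r₀ ≤ Psi N α b c ε r := by
        rcases eq_or_lt_of_le hr.1.le with h | h
        · rw [h]
        · exact (hmono hr₀ ⟨le_trans hr₀.1 hr.1.le, hr.2⟩ h).le
      linarith
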